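/- A pair of consecutive data points that contains no center and is not split by any Voronoi boundary ends up entirely in one cluster: if x_{2i-1}, x_{2i} both lie strictly on the same side of all midpoints between consecutive centers, then they are assigned to the same center; if additionally some other point is assigned to that same center, the resulting cluster strictly contains the pair. -/

import Mathlib

open scoped Classical

/-- Nearest-center assignment in ℝ (ties broken toward the smaller center). -/
noncomputable def nearest (C : Finset ℝ) (p : ℝ) : ℝ :=
  ((C.filter (fun c => ∀ c' ∈ C, |p - c| ≤ |p - c'|)).min).untopD 0

private lemma mid_iff_left (p c c' : ℝ) (h : c < c') :
    |p - c| ≤ |p - c'| ↔ p ≤ (c + c') / 2 := by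
  rcases abs_cases (p - c) with ⟨h1, h2⟩ | ⟨h1, h2⟩ <;>
  rcases abs_cases (p - c') with ⟨h3, h4⟩ | ⟨h3, h4⟩ <;>
  constructor <;> intro <;> linarith

private lemma mid_iff_right (p c c' : ℝ) (h : c' < c) :
    |p - c| ≤ |p - c'| ↔ (c' + c) / 2 ≤ p := by
  rcases abs_cases (p - c) with ⟨h1, h2⟩ | ⟨h1, h2⟩ <;>
  rcases abs_cases (p - c') with ⟨h3, h4⟩ | ⟨h3, h4⟩ <;>
  constructor <;> intro <;> linarith

/-- a pair of consecutive data points lying strictly on the same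
side of every midpoint between two centers is assigned to a single center; if
some further data point is assigned to that same center, the resulting
cluster strictly contains the pair (so the partition is not the target
pairing). -/
theorem stmt_12 (k : ℕ) (x : Fin (2 * k) → ℝ) (hx : StrictMono x)
    (C : Finset ℝ) (hC : C.Nonempty) (i : Fin k)
    (a b : ℝ)
    (ha : a = x ⟨2 * i.val, by have := i.isLt; omega⟩)
    (hb : b = x ⟨2 * i.val + 1, by have := i.isLt; omega⟩)
    (hside : ∀ c ∈ C, ∀ c' ∈ C, c < c' →
      ((a < (c + c') / 2 ∧ b < (c + c') / 2) ∨
       ((c + c') / 2 < a ∧ (c + c') / 2 < b))) :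
    nearest C a = nearest C b ∧
    ∀ p ∈ Finset.image x Finset.univ, p ≠ a → p ≠ b →
      nearest C p = nearest C a →
      ({a, b} : Finset ℝ) ⊂
        (Finset.image x Finset.univ).filter
          (fun q => nearest C q = nearest C a) := by
  have hiff : ∀ c ∈ C, ∀ c' ∈ C, (|a - c| ≤ |a - c'| ↔ |b - c| ≤ |b - c'|) := by
    intro c hc c' hc'
    rcases lt_trichotomy c c' with h | h | h
    · rw [mid_iff_left a c c' h, mid_iff_left b c c' h]
      rcases hside c hc c' hc' h with ⟨h1, h2⟩ | ⟨h1, h2⟩ <;>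
        constructor <;> intro <;> linarith
    · subst h; simp
    · rw [mid_iff_right a c c' h, mid_iff_right b c c' h]
      rcases hside c' hc' c hc h with ⟨h1, h2⟩ | ⟨h1, h2⟩ <;>
        constructor <;> intro <;> linarith
  have hfilter : C.filter (fun c => ∀ c' ∈ C, |a - c| ≤ |a - c'|)
      = C.filter (fun c => ∀ c' ∈ C, |b - c| ≤ |b - c'|) := by
    apply Finset.filter_congr
    intro c hc
    constructor
    · intro H c' hc'; exact (hiff c hc c' hc').mp (H c' hc')
    · intro H c' hc'; exact (hiff c hc c' hc').mpr (H c' hc')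
  have hab : nearest C a = nearest C b := by unfold nearest; rw [hfilter]
  refine ⟨hab, ?_⟩
  intro p hp hpa hpb hpn
  have haim : a ∈ Finset.image x Finset.univ := by
    rw [ha]; exact Finset.mem_image_of_mem x (Finset.mem_univ _)
  have hbim : b ∈ Finset.image x Finset.univ := by
    rw [hb]; exact Finset.mem_image_of_mem x (Finset.mem_univ _)
  have hsub : ({a, b} : Finset ℝ) ⊆
      (Finset.image x Finset.univ).filter (fun q => nearest C q = nearest C a) := by
    intro q hq
    rcases Finset.mem_insert.mp hq with rfl | hq
    · exact Finset.mem_filter.mpr ⟨haim, rfl⟩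
    · rcases Finset.mem_singleton.mp hq with rfl
      exact Finset.mem_filter.mpr ⟨hbim, hab.symm⟩
  refine Finset.ssubset_def.mpr ⟨hsub, fun hcon => ?_⟩
  have : p ∈ ({a, b} : Finset ℝ) :=
    hcon (Finset.mem_filter.mpr ⟨hp, hpn⟩)
  rcases Finset.mem_insert.mp this with rfl | h
  · exact hpa rfl
  · exact hpb (Finset.mem_singleton.mp h)
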